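/- arXiv:2304.01135 — 6 statements merged into one kernel-verified Lean document; each statement's English description precedes it below -/
import Mathlib

section
/- Let A be a commutative Noetherian ring, I ⊆ A an ideal, and E, F finitely generated A-modules. For an A-module M and n ≥ 0 write M_n = M/I^{n+1}M. Then for every e ≥ 0 there exists k_e ≥ e such that for every k ≥ k_e, the map Hom_A(E,F)_e → Hom_A(E_k, F_k)_e induced by the restriction map Hom_A(E,F) → Hom_A(E_k, F_k) (sending an A-linear homomorphism h : E → F to the induced homomorphism E/I^{k+1}E → F/I^{k+1}F) is injective. -/
/-!
Statement 0 (Artin–Rees / Mittag-Leffler type lemma for Hom modules):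
Let `A` be a commutative Noetherian ring, `I ⊆ A` an ideal, `E`, `F` finitely generated
`A`-modules.  For an `A`-module `M` write `M_n = M / I^{n+1} M`.  Then for every `e ≥ 0`
there exists `k_e ≥ e` such that for every `k ≥ k_e` the map
`Hom_A(E,F)_e → Hom_A(E_k, F_k)_e` induced by restriction is injective.
-/

/-- For any `A`-linear map `h : E → F` and any ideal `J`, `h` maps `J • ⊤` into `J • ⊤`. -/
theorem smul_top_le_comap_smul_top {A : Type*} [CommRing A] (J : Ideal A)
    {E F : Type*} [AddCommGroup E] [Module A E] [AddCommGroup F] [Module A F]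
    (h : E →ₗ[A] F) :
    J • (⊤ : Submodule A E) ≤ (J • (⊤ : Submodule A F)).comap h :=
  Submodule.map_le_iff_le_comap.mp (by
    rw [Submodule.map_smul'']
    exact Submodule.smul_mono le_rfl le_top)

/-- The restriction map `Hom_A(E, F) → Hom_A(E/I^{k+1}E, F/I^{k+1}F)`, sending an
`A`-linear map `h : E → F` to the induced homomorphism on the quotients. -/
def restrictHom {A : Type*} [CommRing A] (I : Ideal A)
    (E F : Type*) [AddCommGroup E] [Module A E] [AddCommGroup F] [Module A F] (k : ℕ) :
    (E →ₗ[A] F) →ₗ[A]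
      ((E ⧸ (I ^ (k + 1) • (⊤ : Submodule A E))) →ₗ[A]
        (F ⧸ (I ^ (k + 1) • (⊤ : Submodule A F)))) where
  toFun h := Submodule.mapQ _ _ h (smul_top_le_comap_smul_top (I ^ (k + 1)) h)
  map_add' h g := by
    apply LinearMap.ext
    intro x
    obtain ⟨y, rfl⟩ := Submodule.Quotient.mk_surjective _ x
    simp [Submodule.mapQ_apply]
  map_smul' c h := by
    apply LinearMap.ext
    intro x
    obtain ⟨y, rfl⟩ := Submodule.Quotient.mk_surjective _ x
    simp [Submodule.mapQ_apply]

lemma mem_smul_top_apply {A M N : Type*} [CommRing A] [AddCommGroup M] [Module A M]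
    [AddCommGroup N] [Module A N] (J : Ideal A) (f : M →ₗ[A] N) {x : M}
    (hx : x ∈ J • (⊤ : Submodule A M)) : f x ∈ J • (⊤ : Submodule A N) :=
  smul_top_le_comap_smul_top J f hx

lemma eval_mem_smul_top {A M N : Type*} [CommRing A] [AddCommGroup M] [Module A M]
    [AddCommGroup N] [Module A N] (J : Ideal A) {g : M →ₗ[A] N}
    (hg : g ∈ J • (⊤ : Submodule A (M →ₗ[A] N))) (x : M) :
    g x ∈ J • (⊤ : Submodule A N) :=
  mem_smul_top_apply J (LinearMap.applyₗ x) hg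

lemma free_mem_smul_top {A F : Type*} [CommRing A] [AddCommGroup F] [Module A F] (J : Ideal A)
    {n : ℕ} {g : (Fin n → A) →ₗ[A] F} (hg : ∀ x, g x ∈ J • (⊤ : Submodule A F)) :
    g ∈ J • (⊤ : Submodule A ((Fin n → A) →ₗ[A] F)) := by
  classical
  let B := Pi.basisFun A (Fin n)
  have hv : (fun i => g (B i)) ∈ J • (⊤ : Submodule A (Fin n → F)) := by
    rw [show (fun i => g (B i)) = ∑ i : Fin n, Pi.single i (g (B i)) from
      (Finset.univ_sum_single _).symm]
    refine Submodule.sum_mem _ fun i _ => ?_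
    have := smul_top_le_comap_smul_top (E := F) (F := Fin n → F) J
      (LinearMap.single A (fun _ => F) i) (hg (B i))
    exact this
  have h2 := mem_smul_top_apply (M := Fin n → F) (N := (Fin n → A) →ₗ[A] F) J
    ((B.constr A (M' := F)).toLinearMap) hv
  have hgeq : (B.constr A (M' := F)) (fun i => g (B i)) = g := B.ext fun i => by
    rw [Module.Basis.constr_basis]
  rw [show ((B.constr A (M' := F)).toLinearMap) (fun i => g (B i)) = g from hgeq] at h2
  exact h2

lemma exists_factor {A P E F : Type*} [CommRing A] [AddCommGroup P] [Module A P]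
    [AddCommGroup E] [Module A E] [AddCommGroup F] [Module A F]
    (p : P →ₗ[A] E) (hp : Function.Surjective p) (g : P →ₗ[A] F)
    (hker : LinearMap.ker p ≤ LinearMap.ker g) : ∃ h : E →ₗ[A] F, h ∘ₗ p = g := by
  let e := p.quotKerEquivOfSurjective hp
  refine ⟨((LinearMap.ker p).liftQ g hker).comp (e.symm : E →ₗ[A] P ⧸ LinearMap.ker p), ?_⟩
  ext x
  have hx : e.symm (p x) = Submodule.Quotient.mk x := by
    apply e.injective
    rw [LinearEquiv.apply_symm_apply]
    simp [e, LinearMap.quotKerEquivOfSurjective]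
  simp [hx]

lemma mapQ_injective_of {A M N : Type*} [CommRing A] [AddCommGroup M] [Module A M]
    [AddCommGroup N] [Module A N] (pm : Submodule A M) (pn : Submodule A N)
    (f : M →ₗ[A] N) (hf : pm ≤ pn.comap f) (H : ∀ x, f x ∈ pn → x ∈ pm) :
    Function.Injective (Submodule.mapQ pm pn f hf) := by
  intro a b hab
  obtain ⟨x, rfl⟩ := Submodule.Quotient.mk_surjective _ a
  obtain ⟨y, rfl⟩ := Submodule.Quotient.mk_surjective _ b
  rw [Submodule.mapQ_apply, Submodule.mapQ_apply, Submodule.Quotient.eq] at hab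
  rw [Submodule.Quotient.eq]
  exact H _ (by rw [map_sub]; exact hab)


section ARpoly

universe u v

variable {A : Type u} [CommRing A] {M : Type v} [AddCommGroup M] [Module A M]

private def uliftIdeal (I : Ideal A) : Ideal (ULift.{v} A) :=
  I.comap ((ULift.ringEquiv : ULift.{v} A ≃+* A) : ULift.{v} A →+* A)

private lemma uliftIdeal_pow (I : Ideal A) (j : ℕ) :
    uliftIdeal.{u, v} (I ^ j) = (uliftIdeal.{u, v} I) ^ j := by
  have h : ∀ J : Ideal A, uliftIdeal.{u, v} J =
      J.map ((ULift.ringEquiv : ULift.{v} A ≃+* A).symm : A →+* ULift.{v} A) := by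
    intro J
    have h2 := Ideal.comap_symm (I := J) (ULift.ringEquiv : ULift.{v} A ≃+* A).symm
    rw [RingEquiv.symm_symm] at h2
    rw [uliftIdeal]
    exact h2
  rw [h, h, Ideal.map_pow]

variable (A) in
private def uliftSub (p : Submodule A M) : Submodule (ULift.{v} A) (ULift.{u} M) where
  carrier := {x | x.down ∈ p}
  add_mem' := fun hx hy => p.add_mem hx hy
  zero_mem' := p.zero_mem
  smul_mem' := fun a x hx => p.smul_mem a.down hx

private lemma mem_uliftSub {p : Submodule A M} {x : ULift.{u} M} :
    x ∈ uliftSub A p ↔ x.down ∈ p := Iff.rfl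

private lemma uliftSub_injective :
    Function.Injective (uliftSub.{u, v} A (M := M)) := by
  intro p q hpq
  ext x
  have : (ULift.up x ∈ uliftSub A p) ↔ (ULift.up x ∈ uliftSub A q) := by rw [hpq]
  exact this

private lemma uliftSub_top : uliftSub.{u, v} A (⊤ : Submodule A M) = ⊤ := by
  ext x; simp [mem_uliftSub]

private lemma uliftSub_inf (p q : Submodule A M) :
    uliftSub.{u, v} A (p ⊓ q) = uliftSub A p ⊓ uliftSub A q := by
  ext x; simp [mem_uliftSub]

private lemma uliftSub_smul (J : Ideal A) (p : Submodule A M) :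
    uliftSub.{u, v} A (J • p) = uliftIdeal.{u, v} J • uliftSub A p := by
  apply le_antisymm
  · intro x hx
    have key : ∀ z ∈ J • p, (ULift.up z : ULift.{u} M) ∈ uliftIdeal.{u, v} J • uliftSub A p := by
      intro z hz
      refine Submodule.smul_induction_on hz ?_ ?_
      · intro a ha y hy
        exact Submodule.smul_mem_smul (show (ULift.up a : ULift.{v} A) ∈ uliftIdeal.{u, v} J from ha)
          (show (ULift.up y : ULift.{u} M) ∈ uliftSub A p from hy)
      · intro y z hy hz
        exact Submodule.add_mem _ hy hz
    have := key x.down hx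
    rwa [ULift.up_down] at this
  · refine Submodule.smul_le.mpr fun r hr x hx => ?_
    exact Submodule.smul_mem_smul (show r.down ∈ J from hr) (show x.down ∈ p from hx)

private lemma AR_poly [IsNoetherianRing A] (I : Ideal A) [Module.Finite A M]
    (N : Submodule A M) :
    ∃ k : ℕ, ∀ n, n ≥ k →
      I ^ n • (⊤ : Submodule A M) ⊓ N = I ^ (n - k) • (I ^ k • (⊤ : Submodule A M) ⊓ N) := by
  haveI : IsNoetherianRing (ULift.{v} A) :=
    isNoetherianRing_of_ringEquiv A (ULift.ringEquiv : ULift.{v} A ≃+* A).symm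
  haveI : Module.Finite (ULift.{v} A) (ULift.{u} M) := by
    rw [Module.finite_def, Submodule.fg_def]
    obtain ⟨s, hsfin, hs⟩ := Submodule.fg_def.mp (Module.finite_def.mp ‹Module.Finite A M›)
    refine ⟨ULift.up '' s, hsfin.image _, ?_⟩
    rw [eq_top_iff]
    rintro x -
    have hx : x.down ∈ Submodule.span A s := by rw [hs]; trivial
    have key : ∀ z ∈ Submodule.span A s,
        (ULift.up z : ULift.{u} M) ∈ Submodule.span (ULift.{v} A) (ULift.up '' s) := by
      intro z hz
      induction hz using Submodule.span_induction with
      | mem y hy => exact Submodule.subset_span ⟨y, hy, rfl⟩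
      | zero => exact Submodule.zero_mem _
      | add y z _ _ hy hz => exact Submodule.add_mem _ hy hz
      | smul a y _ hy => exact Submodule.smul_mem _ (ULift.up a) hy
    have hkey := key x.down hx
    rwa [ULift.up_down] at hkey
  obtain ⟨k, hk⟩ := Ideal.exists_pow_inf_eq_pow_smul (uliftIdeal.{u, v} I) (uliftSub A N)
  refine ⟨k, fun n hn => uliftSub_injective ?_⟩
  rw [uliftSub_inf, uliftSub_smul, uliftSub_smul, uliftSub_inf, uliftSub_smul, uliftSub_top,
    uliftIdeal_pow, uliftIdeal_pow, uliftIdeal_pow]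
  exact hk n hn

end ARpoly

theorem hom_quotient_injective_of_large_k
    {A : Type*} [CommRing A] [IsNoetherianRing A] (I : Ideal A)
    (E F : Type*) [AddCommGroup E] [Module A E] [AddCommGroup F] [Module A F]
    [Module.Finite A E] [Module.Finite A F] (e : ℕ) :
    ∃ k_e : ℕ, e ≤ k_e ∧ ∀ k : ℕ, k_e ≤ k →
      Function.Injective
        (Submodule.mapQ
          (I ^ (e + 1) • (⊤ : Submodule A (E →ₗ[A] F)))
          (I ^ (e + 1) • (⊤ : Submodule A
            ((E ⧸ (I ^ (k + 1) • (⊤ : Submodule A E))) →ₗ[A]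
              (F ⧸ (I ^ (k + 1) • (⊤ : Submodule A F))))))
          (restrictHom I E F k)
          (smul_top_le_comap_smul_top (I ^ (e + 1)) (restrictHom I E F k))) := by
  classical
  obtain ⟨n, p, hp⟩ := Module.Finite.exists_fin' A E
  let ι : (E →ₗ[A] F) →ₗ[A] ((Fin n → A) →ₗ[A] F) := LinearMap.lcomp A F p
  have hι : Function.Injective ι := by
    intro h1 h2 h12
    apply LinearMap.ext
    intro x
    obtain ⟨y, rfl⟩ := hp x
    exact LinearMap.congr_fun h12 y
  have finW : Module.Finite A ((Fin n → A) →ₗ[A] F) :=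
    Module.Finite.equiv ((Pi.basisFun A (Fin n)).constr A (M' := F))
  have finK : Module.Finite A (LinearMap.ker p) :=
    Module.Finite.of_injective (LinearMap.ker p).subtype (Submodule.injective_subtype _)
  obtain ⟨m, pk, hpk⟩ := Module.Finite.exists_fin' A (LinearMap.ker p)
  let u : (Fin m → A) →ₗ[A] (Fin n → A) := (LinearMap.ker p).subtype ∘ₗ pk
  have hu : ∀ y, p (u y) = 0 := fun y => LinearMap.mem_ker.mp (pk y).2
  have hu_range : ∀ x ∈ LinearMap.ker p, ∃ y, u y = x := by
    intro x hx
    obtain ⟨y, hy⟩ := hpk ⟨x, hx⟩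
    exact ⟨y, congrArg Subtype.val hy⟩
  let ρ : ((Fin n → A) →ₗ[A] F) →ₗ[A] ((Fin m → A) →ₗ[A] F) := LinearMap.lcomp A F u
  have finW2 : Module.Finite A ((Fin m → A) →ₗ[A] F) :=
    Module.Finite.equiv ((Pi.basisFun A (Fin m)).constr A (M' := F))
  have hkerρ : LinearMap.ker ρ = LinearMap.range ι := by
    ext g
    simp only [LinearMap.mem_ker, LinearMap.mem_range]
    constructor
    · intro hg
      have hker : LinearMap.ker p ≤ LinearMap.ker g := by
        intro x hx
        obtain ⟨y, rfl⟩ := hu_range x hx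
        exact LinearMap.congr_fun hg y
      obtain ⟨h', hh'⟩ := exists_factor p hp g hker
      exact ⟨h', hh'⟩
    · rintro ⟨h', rfl⟩
      apply LinearMap.ext
      intro y
      show h' (p (u y)) = 0
      rw [hu y, map_zero]
  obtain ⟨c1, hc1⟩ := AR_poly I (M := (Fin n → A) →ₗ[A] F) (LinearMap.range ι)
  obtain ⟨c2, hc2⟩ := AR_poly I (M := (Fin m → A) →ₗ[A] F) (LinearMap.range ρ)
  refine ⟨e + c1 + c2, by omega, fun k hk => ?_⟩
  apply mapQ_injective_of
  intro h hh
  set Jk := (I ^ (k+1) • ⊤ : Submodule A F) with hJk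
  let τ : ((Fin n → A) →ₗ[A] F) →ₗ[A] ((Fin n → A) →ₗ[A] (F ⧸ Jk)) :=
    LinearMap.llcomp A (Fin n → A) F (F ⧸ Jk) Jk.mkQ
  have hτ_surj : Function.Surjective τ := by
    intro g
    obtain ⟨g', hg'⟩ := Module.projective_lifting_property Jk.mkQ g (Submodule.mkQ_surjective _)
    exact ⟨g', hg'⟩
  have hkerτ : LinearMap.ker τ = I ^ (k+1) • ⊤ := by
    ext g
    simp only [LinearMap.mem_ker]
    constructor
    · intro hg
      refine free_mem_smul_top _ fun x => ?_
      have hx : Jk.mkQ (g x) = 0 := LinearMap.congr_fun hg x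
      rwa [Submodule.mkQ_apply, Submodule.Quotient.mk_eq_zero] at hx
    · intro hg
      apply LinearMap.ext
      intro x
      show Jk.mkQ (g x) = 0
      rw [Submodule.mkQ_apply, Submodule.Quotient.mk_eq_zero]
      exact eval_mem_smul_top _ hg x
  let σ : ((E ⧸ (I ^ (k+1) • ⊤ : Submodule A E)) →ₗ[A] (F ⧸ Jk)) →ₗ[A]
      ((Fin n → A) →ₗ[A] (F ⧸ Jk)) :=
    LinearMap.lcomp A (F ⧸ Jk) ((I ^ (k+1) • ⊤ : Submodule A E).mkQ ∘ₗ p)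
  have key1 : τ (ι h) = σ (restrictHom I E F k h) := by
    apply LinearMap.ext
    intro x
    show Jk.mkQ (h (p x)) =
      (restrictHom I E F k h) (Submodule.Quotient.mk (p x))
    simp [restrictHom, Submodule.mapQ_apply, Jk]
  have h1 : τ (ι h) ∈ I ^ (e+1) • LinearMap.range σ := by
    rw [key1]
    have := Submodule.mem_map_of_mem (f := σ) hh
    rwa [Submodule.map_smul'', Submodule.map_top] at this
  have h2 : LinearMap.range σ ≤
      Submodule.map τ (LinearMap.range ι ⊔ I ^ (k+1-c2) • ⊤) := by
    rintro _ ⟨g, rfl⟩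
    obtain ⟨gh, hgh⟩ := hτ_surj (σ g)
    have hval : ρ gh ∈ (I ^ (k+1) • ⊤ : Submodule A ((Fin m → A) →ₗ[A] F)) := by
      refine free_mem_smul_top _ fun y => ?_
      have h0 : Jk.mkQ (gh (u y)) = σ g (u y) := LinearMap.congr_fun hgh (u y)
      have h0' : σ g (u y) = 0 := by
        show g (Submodule.Quotient.mk (p (u y))) = 0
        rw [hu y, Submodule.Quotient.mk_zero, map_zero]
      rw [h0'] at h0
      rwa [Submodule.mkQ_apply, Submodule.Quotient.mk_eq_zero] at h0
    have hmem : ρ gh ∈ (I ^ (k+1) • ⊤ : Submodule A _) ⊓ LinearMap.range ρ :=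
      ⟨hval, ⟨gh, rfl⟩⟩
    rw [hc2 (k+1) (by omega)] at hmem
    have hmem2 : ρ gh ∈ Submodule.map ρ (I ^ (k+1-c2) • ⊤) := by
      rw [Submodule.map_smul'', Submodule.map_top]
      exact Submodule.smul_mono le_rfl inf_le_right hmem
    obtain ⟨w', hw'mem, hw'⟩ := hmem2
    have hker : gh - w' ∈ LinearMap.ker ρ := by
      rw [LinearMap.mem_ker, map_sub, hw', sub_self]
    rw [hkerρ] at hker
    refine ⟨gh, ?_, hgh⟩
    have hdec : gh = (gh - w') + w' := by abel
    rw [hdec]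
    exact Submodule.add_mem_sup hker hw'mem
  have h3 : τ (ι h) ∈
      Submodule.map τ (I ^ (e+1) • (LinearMap.range ι ⊔ I ^ (k+1-c2) • ⊤)) := by
    rw [Submodule.map_smul'']
    exact Submodule.smul_mono le_rfl h2 h1
  obtain ⟨w, hw, hτw⟩ := h3
  have h4 : ι h - w ∈ LinearMap.ker τ := by
    rw [LinearMap.mem_ker, map_sub, hτw, sub_self]
  rw [hkerτ] at h4
  have h5 : ι h ∈ I ^ (e+1) • LinearMap.range ι ⊔ I ^ (k+1-c2) • ⊤ := by
    rw [Submodule.smul_sup] at hw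
    have hw2 : w ∈ I ^ (e+1) • LinearMap.range ι ⊔ I ^ (k+1-c2) • ⊤ :=
      (show I ^ (e+1) • LinearMap.range ι ⊔ I ^ (e+1) • (I ^ (k+1-c2) • (⊤ : Submodule A ((Fin n → A) →ₗ[A] F))) ≤
          I ^ (e+1) • LinearMap.range ι ⊔ I ^ (k+1-c2) • (⊤ : Submodule A ((Fin n → A) →ₗ[A] F)) from
        sup_le_sup le_rfl Submodule.smul_le_right) hw
    have hr : ι h - w ∈ I ^ (k+1-c2) • (⊤ : Submodule A ((Fin n → A) →ₗ[A] F)) :=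
      Submodule.smul_mono (Ideal.pow_le_pow_right (by omega)) le_rfl h4
    have := Submodule.add_mem _ hw2 (Submodule.mem_sup_right hr)
    rwa [show w + (ι h - w) = ι h by abel] at this
  obtain ⟨s, hs, r, hr, hsr⟩ := Submodule.mem_sup.mp h5
  have hrS : r ∈ LinearMap.range ι := by
    have hsS : s ∈ LinearMap.range ι := Submodule.smul_le_right hs
    have hre : r = ι h - s := by rw [← hsr]; abel
    rw [hre]
    exact Submodule.sub_mem _ ⟨h, rfl⟩ hsS
  have hr2 : r ∈ (I ^ (k+1-c2) • ⊤ : Submodule A _) ⊓ LinearMap.range ι := ⟨hr, hrS⟩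
  rw [hc1 (k+1-c2) (by omega)] at hr2
  have hr3 : r ∈ I ^ (e+1) • LinearMap.range ι :=
    Submodule.smul_mono (Ideal.pow_le_pow_right (by omega)) inf_le_right hr2
  have h6 : ι h ∈ I ^ (e+1) • LinearMap.range ι := by
    rw [← hsr]
    exact Submodule.add_mem _ hs hr3
  rw [← Submodule.map_top, ← Submodule.map_smul''] at h6
  obtain ⟨h', hh', hhe⟩ := h6
  have hfin : h' = h := hι hhe
  rwa [← hfin]
end

section
/- Let P be an integral commutative monoid, G an abelian group, and ι : P → G an injective monoid homomorphism. Let V be a module over the monoid algebra ℂ[P] equipped with a G-grading, i.e. a family (V_g)_{g∈G} of ℂ-subspaces whose internal direct sum is all of V and such that x^p · V_g ⊆ V_{ι(p)+g} for all p ∈ P and g ∈ G. Let F ⊆ P be a face and let f ∈ F generate F as a face, i.e. for every x ∈ F there exist y ∈ F and n ∈ ℕ with x + y = n·f. Assume there exist finitely many elements f_1, …, f_s ∈ F and homogeneous elements v_i ∈ V_{−ι(f_i)} (1 ≤ i ≤ s) such that for every g lying in the subgroup of G generated by ι(F), the subspace V_g is contained in the ℂ-linear span of {x^φ · v_i : φ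 ∈ F, 1 ≤ i ≤ s}. Then for every n ∈ ℕ and every v ∈ V_{n·ι(f)} there exists w ∈ V_0 with v = x^{n·f} · w. In particular, if multiplication by x^f is injective on V, then for every n ∈ ℕ the map V_0 → V_{n·ι(f)}, w ↦ x^{n·f}·w, is bijective. -/
/-!
Statement 3: graded modules over monoid algebras.  `P` an integral commutative monoid,
`G` an abelian group, `ι : P → G` an injective monoid homomorphism, `V` a `ℂ[P]`-module
with a `G`-grading `(V_g)`.  If `F ⊆ P` is a face generated (as a face) by `f ∈ F`, and
`V` restricted to the subgroup generated by `ι(F)` is generated in degrees `-ι(f_i)`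
(with `f_i ∈ F`), then every `v ∈ V_{n·ι(f)}` is `x^{n·f} · w` for some `w ∈ V_0`; and
if multiplication by `x^f` is injective on `V`, then `V_0 → V_{n·ι(f)}`, `w ↦ x^{n·f}·w`,
is bijective.
-/

open AddMonoidAlgebra

theorem of'_add' (P : Type) [AddCancelCommMonoid P] (a b : P) :
    of' ℂ P (a + b) = of' ℂ P a * of' ℂ P b := by
  simp [of'_apply, AddMonoidAlgebra.single_mul_single]

theorem graded_module_degree_zero_generation
    (P : Type) [AddCancelCommMonoid P]
    (G : Type) [AddCommGroup G] (ι : P →+ G) (hι_inj : Function.Injective ι)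
    (V : Type) [AddCommGroup V] [Module ℂ V]
    [Module (AddMonoidAlgebra ℂ P) V] [IsScalarTower ℂ (AddMonoidAlgebra ℂ P) V]
    (Vg : G → Submodule ℂ V)
    (hindep : iSupIndep Vg)
    (hsup : (⨆ g, Vg g) = ⊤)
    (hgrade : ∀ (p : P) (g : G), ∀ v ∈ Vg g, (of' ℂ P p) • v ∈ Vg (ι p + g))
    (F : AddSubmonoid P) (hface : ∀ x y : P, x + y ∈ F → x ∈ F ∧ y ∈ F)
    (f : P) (hfF : f ∈ F)
    (hf_gen : ∀ x ∈ F, ∃ y ∈ F, ∃ n : ℕ, x + y = n • f)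
    (s : ℕ) (fi : Fin s → P) (hfi : ∀ i, fi i ∈ F)
    (vi : Fin s → V) (hvi : ∀ i, vi i ∈ Vg (-(ι (fi i))))
    (hgen : ∀ g ∈ AddSubgroup.closure ((ι : P → G) '' (F : Set P)),
      (Vg g : Set V) ⊆
        ↑(Submodule.span ℂ
          {w : V | ∃ φ ∈ F, ∃ i : Fin s, w = (of' ℂ P φ) • vi i})) :
    (∀ n : ℕ, ∀ v ∈ Vg (n • ι f), ∃ w ∈ Vg 0, (of' ℂ P (n • f)) • w = v) ∧
    ((Function.Injective fun v : V => (of' ℂ P f) • v) →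
      ∀ n : ℕ, ∀ v ∈ Vg (n • ι f),
        ∃! w : V, w ∈ Vg 0 ∧ (of' ℂ P (n • f)) • w = v) := by
  classical
  haveI : SMulCommClass ℂ (AddMonoidAlgebra ℂ P) V := IsScalarTower.to_smulCommClass
  have hinternal : DirectSum.IsInternal Vg :=
    DirectSum.isInternal_submodule_of_iSupIndep_of_iSup_eq_top hindep hsup
  letI : DirectSum.Decomposition Vg := hinternal.chooseDecomposition
  have key : ∀ n : ℕ, ∀ v ∈ Vg (n • ι f), ∃ w ∈ Vg 0, (of' ℂ P (n • f)) • w = v := by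
    intro n v hv
    set g : G := n • ι f with hg
    set L : V →ₗ[ℂ] V :=
      { toFun := fun v => (of' ℂ P (n • f)) • v
        map_add' := fun a b => smul_add _ a b
        map_smul' := fun c a => smul_comm (of' ℂ P (n • f)) c a } with hL
    set T : Submodule ℂ V := (Vg 0).map L with hT
    have hgmem : g ∈ AddSubgroup.closure ((ι : P → G) '' (F : Set P)) := by
      have hfmem : (ι f : G) ∈ AddSubgroup.closure ((ι : P → G) '' (F : Set P)) :=
        AddSubgroup.subset_closure ⟨f, hfF, rfl⟩
      exact AddSubgroup.nsmul_mem _ hfmem n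
    have hvspan := hgen g hgmem hv
    have proj_mem : ∀ u ∈ Submodule.span ℂ
        {w : V | ∃ φ ∈ F, ∃ i : Fin s, w = (of' ℂ P φ) • vi i},
        ((DirectSum.decompose Vg u g : V)) ∈ T := by
      intro u hu
      induction hu using Submodule.span_induction with
      | mem w hw =>
        obtain ⟨φ, hφ, i, rfl⟩ := hw
        have hdeg : (of' ℂ P φ) • vi i ∈ Vg (ι φ + -(ι (fi i))) := hgrade _ _ _ (hvi i)
        by_cases hgg : ι φ + -(ι (fi i)) = g
        · rw [DirectSum.decompose_of_mem_same Vg (hgg ▸ hdeg)]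
          have hφeq : φ = n • f + fi i := by
            apply hι_inj
            rw [map_add, map_nsmul]
            show ι φ = g + ι (fi i)
            rw [← hgg]
            abel
          refine ⟨(of' ℂ P (fi i)) • vi i, ?_, ?_⟩
          · have h0 := hgrade (fi i) (-(ι (fi i))) _ (hvi i)
            simpa using h0
          · show (of' ℂ P (n • f)) • ((of' ℂ P (fi i)) • vi i) = (of' ℂ P φ) • vi i
            rw [← mul_smul, ← of'_add', ← hφeq]
        · rw [DirectSum.decompose_of_mem_ne Vg hdeg hgg]
          exact T.zero_mem
      | zero => simp
      | add x y _ _ hx hy =>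
        rw [DirectSum.decompose_add]
        exact T.add_mem hx hy
      | smul c x _ hx =>
        rw [DirectSum.decompose_smul]
        exact T.smul_mem c hx
    have hvT : v ∈ T := by
      have := proj_mem v hvspan
      rwa [DirectSum.decompose_of_mem_same Vg hv] at this
    obtain ⟨w, hw0, hw⟩ := hvT
    exact ⟨w, hw0, hw⟩
  refine ⟨key, ?_⟩
  intro hinj
  have hninj : ∀ n : ℕ, Function.Injective fun v : V => (of' ℂ P (n • f)) • v := by
    intro n
    induction n with
    | zero =>
      have h1 : of' ℂ P ((0 : ℕ) • f) = 1 := by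
        rw [zero_nsmul, of'_apply]; rfl
      intro a b hab
      have hab' : of' ℂ P ((0 : ℕ) • f) • a = of' ℂ P ((0 : ℕ) • f) • b := hab
      rwa [h1, one_smul, one_smul] at hab'
    | succ m ih =>
      intro a b hab
      have hab' : of' ℂ P ((m + 1) • f) • a = of' ℂ P ((m + 1) • f) • b := hab
      rw [succ_nsmul, of'_add', mul_smul, mul_smul] at hab'
      exact hinj (ih hab')
  intro n v hv
  obtain ⟨w, hw0, hw⟩ := key n v hv
  refine ⟨w, ⟨hw0, hw⟩, ?_⟩
  rintro w' ⟨hw'0, hw'⟩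
  exact hninj n (by show of' ℂ P (n • f) • w' = of' ℂ P (n • f) • w; rw [hw', hw])
end

section
/- Let P be an fs monoid, let ι : P → G be its Grothendieck group (so ι is an injective monoid homomorphism into an abelian group G such that every element of G has the form ι(a) − ι(b) with a, b ∈ P), and let F ⊆ P be a face. Then the quotient group G/⟨ι(F)⟩ of G by the subgroup generated by ι(F) is a free abelian group; consequently the quotient homomorphism G → G/⟨ι(F)⟩ admits a group-homomorphism section. In particular, taking F = P^× (the submonoid of invertible elements), the group P^gp/P^× is free abelian. -/
/-!
Statement 4: Let `P` be an fs monoid with Grothendieck group `ι : P → G` and `F ⊆ P`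
a face.  Then `G/⟨ι(F)⟩` is a free abelian group; consequently `G → G/⟨ι(F)⟩` admits a
group-homomorphism section.  In particular (`F = P^×`) the group `P^gp/P^×` is free
abelian.
-/

/-- Elements of the subgroup generated by the image of a submonoid are differences. -/
lemma mem_closure_image_iff {P G : Type} [AddCommMonoid P] [AddCommGroup G]
    (ι : P →+ G) (F : AddSubmonoid P) (g : G) :
    g ∈ AddSubgroup.closure ((ι : P → G) '' (F : Set P)) ↔
      ∃ a ∈ F, ∃ b ∈ F, g = ι a - ι b := by
  constructor
  · intro hg
    refine AddSubgroup.closure_induction ?_ ?_ ?_ ?_ hg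
    · rintro x ⟨a, ha, rfl⟩
      exact ⟨a, ha, 0, F.zero_mem, by simp⟩
    · exact ⟨0, F.zero_mem, 0, F.zero_mem, by simp⟩
    · rintro x y _ _ ⟨a, ha, b, hb, rfl⟩ ⟨c, hc, d, hd, rfl⟩
      exact ⟨a + c, F.add_mem ha hc, b + d, F.add_mem hb hd, by simp [map_add]; abel⟩
    · rintro x _ ⟨a, ha, b, hb, rfl⟩
      exact ⟨b, hb, a, ha, by abel⟩
  · rintro ⟨a, ha, b, hb, rfl⟩
    exact sub_mem (AddSubgroup.subset_closure ⟨a, ha, rfl⟩)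
      (AddSubgroup.subset_closure ⟨b, hb, rfl⟩)

/-- A face absorbs: if a multiple `n • p` with `n ≥ 1` lies in the face, then `p` does. -/
lemma face_nsmul_mem {P : Type} [AddCommMonoid P] (F : AddSubmonoid P)
    (hF : ∀ x y : P, x + y ∈ F → x ∈ F ∧ y ∈ F) (p : P) (n : ℕ) (hn : 1 ≤ n)
    (h : n • p ∈ F) : p ∈ F := by
  obtain ⟨m, rfl⟩ := Nat.exists_eq_add_of_le hn
  rw [add_comm, succ_nsmul] at h
  exact (hF _ _ h).2

theorem quotient_by_face_free
    (P : Type) [AddCancelCommMonoid P] [AddMonoid.FG P]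
    (G : Type) [AddCommGroup G] (ι : P →+ G)
    (hι_inj : Function.Injective ι)
    (hι_diff : ∀ g : G, ∃ a b : P, g = ι a - ι b)
    (hsat : ∀ (g : G) (n : ℕ), 1 ≤ n → n • g ∈ Set.range ι → g ∈ Set.range ι) :
    (∀ F : AddSubmonoid P, (∀ x y : P, x + y ∈ F → x ∈ F ∧ y ∈ F) →
      Module.Free ℤ (G ⧸ AddSubgroup.closure ((ι : P → G) '' (F : Set P))) ∧
      ∃ s : (G ⧸ AddSubgroup.closure ((ι : P → G) '' (F : Set P))) →+ G,
        (QuotientAddGroup.mk'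
            (AddSubgroup.closure ((ι : P → G) '' (F : Set P)))).comp s =
          AddMonoidHom.id _) ∧
    Module.Free ℤ (G ⧸ AddSubgroup.closure ((ι : P → G) '' {p : P | IsAddUnit p})) := by
  -- `G` is a finitely generated group
  have hGfg : AddGroup.FG G := by
    classical
    obtain ⟨S, hS⟩ : (⊤ : AddSubmonoid P).FG := AddMonoid.FG.fg_top
    rw [AddGroup.fg_def]
    refine ⟨S.image ι, ?_⟩
    rw [eq_top_iff]
    intro g _
    obtain ⟨a, b, rfl⟩ := hι_diff g
    have key : ∀ p : P, ι p ∈ AddSubgroup.closure (S.image ι : Set G) := by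
      intro p
      have hp : p ∈ AddSubmonoid.closure (S : Set P) := by rw [hS]; trivial
      refine AddSubmonoid.closure_induction ?_ ?_ ?_ hp
      · intro x hx
        exact AddSubgroup.subset_closure (by simpa using ⟨x, hx, rfl⟩)
      · simpa using (AddSubgroup.closure _).zero_mem
      · intro x y _ _ hx hy
        rw [map_add]; exact add_mem hx hy
    exact sub_mem (key a) (key b)
  have main : ∀ F : AddSubmonoid P, (∀ x y : P, x + y ∈ F → x ∈ F ∧ y ∈ F) →
      Module.Free ℤ (G ⧸ AddSubgroup.closure ((ι : P → G) '' (F : Set P))) ∧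
      ∃ s : (G ⧸ AddSubgroup.closure ((ι : P → G) '' (F : Set P))) →+ G,
        (QuotientAddGroup.mk'
            (AddSubgroup.closure ((ι : P → G) '' (F : Set P)))).comp s =
          AddMonoidHom.id _ := by
    intro F hF
    set H := AddSubgroup.closure ((ι : P → G) '' (F : Set P)) with hH
    -- the quotient is finitely generated
    haveI : AddGroup.FG (G ⧸ H) :=
      AddGroup.fg_of_surjective (f := QuotientAddGroup.mk' H)
        (QuotientAddGroup.mk'_surjective H)
    haveI : Module.Finite ℤ (G ⧸ H) := Module.Finite.iff_addGroup_fg.mpr ‹_›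
    -- the quotient is torsion free
    have keyNat : ∀ (g : G) (n : ℕ), 1 ≤ n → n • g ∈ H → g ∈ H := by
      intro g n hn hng
      obtain ⟨a, ha, b, hb, hab⟩ := (mem_closure_image_iff ι F _).mp hng
      obtain ⟨m, rfl⟩ := Nat.exists_eq_add_of_le hn
      have h1 : (1 + m) • (g + ι b) = ι (a + m • b) := by
        rw [smul_add, hab, map_add, map_nsmul, add_nsmul, one_nsmul]
        abel
      obtain ⟨p, hp⟩ := hsat (g + ι b) (1 + m) hn ⟨_, h1.symm⟩
      have hnp : (1 + m) • p ∈ F := by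
        have : ι ((1 + m) • p) = ι (a + m • b) := by
          rw [map_nsmul, hp, h1]
        have := hι_inj this
        rw [this]
        exact F.add_mem ha (F.nsmul_mem hb _)
      have hpF : p ∈ F := face_nsmul_mem F hF p (1 + m) hn hnp
      have : g = ι p - ι b := by rw [hp]; abel
      rw [this]
      exact (mem_closure_image_iff ι F _).mpr ⟨p, hpF, b, hb, rfl⟩
    haveI : NoZeroSMulDivisors ℤ (G ⧸ H) := by
      constructor
      intro n q h
      by_cases hn : n = 0
      · exact Or.inl hn
      · right
        obtain ⟨g, rfl⟩ := QuotientAddGroup.mk'_surjective H q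
        have habs : (n.natAbs) • ((QuotientAddGroup.mk' H) g) = 0 := by
          rcases Int.natAbs_eq n with he | he
          · rw [he] at h
            rwa [natCast_zsmul] at h
          · rw [he] at h
            rwa [neg_smul, neg_eq_zero, natCast_zsmul] at h
        have hmem : (n.natAbs) • g ∈ H := by
          rwa [← map_nsmul, QuotientAddGroup.mk'_apply,
            QuotientAddGroup.eq_zero_iff] at habs
        have : g ∈ H := keyNat g n.natAbs (by omega) hmem
        simpa [QuotientAddGroup.eq_zero_iff] using this
    haveI hfree : Module.Free ℤ (G ⧸ H) := Module.free_of_finite_type_torsion_free'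
    refine ⟨hfree, ?_⟩
    -- build a section using a basis of the free quotient
    let b := Module.Free.chooseBasis ℤ (G ⧸ H)
    have hsurj := QuotientAddGroup.mk'_surjective H
    choose f hf using fun i => hsurj (b i)
    let l : (G ⧸ H) →ₗ[ℤ] G := b.constr ℤ f
    have hlin : (QuotientAddGroup.mk' H).toIntLinearMap ∘ₗ l = LinearMap.id := by
      refine b.ext fun i => ?_
      simpa [l, Module.Basis.constr_basis] using hf i
    refine ⟨l.toAddMonoidHom, ?_⟩
    ext x
    exact LinearMap.congr_fun hlin x
  refine ⟨main, ?_⟩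
  let U : AddSubmonoid P :=
    { carrier := {p : P | IsAddUnit p}
      zero_mem' := isAddUnit_zero
      add_mem' := fun ha hb => ha.add hb }
  have hUface : ∀ x y : P, x + y ∈ U → x ∈ U ∧ y ∈ U := by
    intro x y hxy
    exact ⟨isAddUnit_of_add_isAddUnit_left hxy, isAddUnit_of_add_isAddUnit_right hxy⟩
  exact (main U hUface).1
end

section
/- Let P be an fs monoid. Then there exists a sharp submonoid Q ⊆ P (i.e. a submonoid whose only invertible element is 0) such that the addition map Q × P^× → P, (q, u) ↦ q + u, is an isomorphism of monoids. -/
/-!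
Statement 5: Let `P` be an fs monoid.  Then there is a sharp submonoid `Q ⊆ P` such
that the addition map `Q × P^× → P`, `(q, u) ↦ q + u`, is an isomorphism of monoids.
-/

/-- The submonoid of invertible elements of an additive commutative monoid. -/
def addUnitsSubmonoid (P : Type*) [AddCommMonoid P] : AddSubmonoid P where
  carrier := {p : P | IsAddUnit p}
  zero_mem' := isAddUnit_zero
  add_mem' := fun ha hb => ha.add hb

theorem exists_sharp_complement
    (P : Type) [AddCancelCommMonoid P] [AddMonoid.FG P]
    (G : Type) [AddCommGroup G] (ι : P →+ G)
    (hι_inj : Function.Injective ι)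
    (hι_diff : ∀ g : G, ∃ a b : P, g = ι a - ι b)
    (hsat : ∀ (g : G) (n : ℕ), 1 ≤ n → n • g ∈ Set.range ι → g ∈ Set.range ι) :
    ∃ Q : AddSubmonoid P,
      (∀ x ∈ Q, ∀ y ∈ Q, x + y = 0 → x = 0) ∧
      ∃ e : (Q × addUnitsSubmonoid P) ≃+ P,
        ∀ z : Q × addUnitsSubmonoid P, e z = (z.1 : P) + (z.2 : P) := by
  classical
  -- the subgroup of G of images of units of P
  have hneg : ∀ a : P, IsAddUnit a → ∃ b : P, IsAddUnit b ∧ a + b = 0 := by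
    intro a ha
    obtain ⟨u, rfl⟩ := ha
    exact ⟨(-u : AddUnits P), ⟨-u, rfl⟩, u.add_neg⟩
  set U : AddSubgroup G :=
    { carrier := ι '' {p : P | IsAddUnit p}
      zero_mem' := ⟨0, isAddUnit_zero, map_zero ι⟩
      add_mem' := by
        rintro _ _ ⟨a, ha, rfl⟩ ⟨b, hb, rfl⟩
        exact ⟨a + b, ha.add hb, map_add ι a b⟩
      neg_mem' := by
        rintro _ ⟨a, ha, rfl⟩
        obtain ⟨b, hb, hab⟩ := hneg a ha
        have : ι a + ι b = 0 := by rw [← map_add, hab, map_zero]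
        exact ⟨b, hb, (neg_eq_of_add_eq_zero_right this).symm⟩ } with hU
  -- key saturation fact: n • g ∈ U → g ∈ U
  have hUsat : ∀ (g : G) (n : ℕ), 1 ≤ n → n • g ∈ U → g ∈ U := by
    intro g n hn hg
    obtain ⟨v, hv, hvg⟩ := hg
    obtain ⟨w, hw, hvw⟩ := hneg v hv
    obtain ⟨a, ha⟩ := hsat g n hn ⟨v, hvg⟩
    have hng' : n • (-g) ∈ Set.range ι := by
      refine ⟨w, ?_⟩
      have h0 : ι v + ι w = 0 := by rw [← map_add, hvw, map_zero]
      rw [smul_neg, ← hvg]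
      exact (neg_eq_of_add_eq_zero_right h0).symm
    obtain ⟨b, hb⟩ := hsat (-g) n hn hng'
    have hab : a + b = 0 := by
      apply hι_inj
      rw [map_add, ha, hb, map_zero, add_neg_cancel]
    exact ⟨a, IsAddUnit.of_add_eq_zero _ hab, ha⟩
  -- G is a finitely generated ℤ-module
  have hGfg : Module.Finite ℤ G := by
    rw [Module.Finite.iff_addGroup_fg]
    obtain ⟨S, hS, hSfin⟩ := AddMonoid.fg_iff.mp ‹AddMonoid.FG P›
    refine AddGroup.fg_iff.mpr ⟨ι '' S, ?_, hSfin.image ι⟩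
    rw [eq_top_iff]
    rintro g -
    obtain ⟨a, b, rfl⟩ := hι_diff g
    have hmem : ∀ p : P, ι p ∈ AddSubgroup.closure (ι '' S) := by
      intro p
      have hp : p ∈ AddSubmonoid.closure S := hS ▸ AddSubmonoid.mem_top p
      have hle : AddSubmonoid.closure S ≤
          (AddSubgroup.closure (ι '' S)).toAddSubmonoid.comap ι :=
        AddSubmonoid.closure_le.mpr fun s hs => AddSubgroup.subset_closure ⟨s, hs, rfl⟩
      exact hle hp
    exact sub_mem (hmem a) (hmem b)
  -- quotient by U is torsion-free, hence free, and the projection splits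
  set U' : Submodule ℤ G := AddSubgroup.toIntSubmodule U with hU'
  have htf : NoZeroSMulDivisors ℤ (G ⧸ U') := by
    refine ⟨fun {c x} hcx => ?_⟩
    by_cases hc : c = 0
    · exact Or.inl hc
    · right
      obtain ⟨g, rfl⟩ := U'.mkQ_surjective x
      have hmem : c • g ∈ U' := by
        rwa [← map_smul U'.mkQ, Submodule.mkQ_apply, Submodule.Quotient.mk_eq_zero] at hcx
      have hn : (c.natAbs : ℤ) • g ∈ U ∨ (c.natAbs : ℤ) • (-g) ∈ U := by
        rcases Int.natAbs_eq c with h | h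
        · left; rwa [← h]
        · right; rw [smul_neg, ← neg_smul, ← h]; exact hmem
      have hna : 1 ≤ c.natAbs := Int.natAbs_pos.mpr hc
      have hgU : g ∈ U := by
        rcases hn with h | h
        · exact hUsat g c.natAbs hna (by rwa [natCast_zsmul] at h)
        · have := hUsat (-g) c.natAbs hna (by rwa [natCast_zsmul] at h)
          simpa using U.neg_mem this
      rw [Submodule.mkQ_apply, Submodule.Quotient.mk_eq_zero]
      exact hgU
  have hfree : Module.Free ℤ (G ⧸ U') := Module.free_of_finite_type_torsion_free'
  obtain ⟨s, hs⟩ := Module.projective_lifting_property U'.mkQ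
    (LinearMap.id : (G ⧸ U') →ₗ[ℤ] (G ⧸ U')) U'.mkQ_surjective
  -- retraction π : G → G with range in U, identity on U
  set π : G →+ G := (LinearMap.id - s.comp U'.mkQ).toAddMonoidHom with hπ
  have hπdef : ∀ g : G, π g = g - s (U'.mkQ g) := fun g => rfl
  have h1 : ∀ x, U'.mkQ (s x) = x := fun x => by
    simpa using DFunLike.congr_fun hs x
  have hπU : ∀ g : G, π g ∈ U := by
    intro g
    have h2 : U'.mkQ (π g) = 0 := by
      rw [hπdef, map_sub, h1, sub_self]
    rw [Submodule.mkQ_apply, Submodule.Quotient.mk_eq_zero] at h2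
    exact h2
  have hπid : ∀ g ∈ U, π g = g := by
    intro g hg
    have : U'.mkQ g = 0 := by
      rw [Submodule.mkQ_apply, Submodule.Quotient.mk_eq_zero]; exact hg
    rw [hπdef, this, map_zero, sub_zero]
  -- the sharp complement
  set Q : AddSubmonoid P :=
    { carrier := {p : P | π (ι p) = 0}
      zero_mem' := by simp
      add_mem' := by
        intro a b ha hb
        simp only [Set.mem_setOf_eq, map_add] at *
        rw [ha, hb, add_zero] } with hQ
  have hQmem : ∀ p : P, p ∈ Q ↔ π (ι p) = 0 := fun p => Iff.rfl
  refine ⟨Q, ?_, ?_⟩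
  · intro x hx y hy hxy
    have hxu : IsAddUnit x := IsAddUnit.of_add_eq_zero _ hxy
    have : π (ι x) = ι x := hπid _ ⟨x, hxu, rfl⟩
    have hx0 : ι x = 0 := by rw [← this, (hQmem x).mp hx]
    exact hι_inj (by rw [hx0, map_zero])
  · set f : (Q × addUnitsSubmonoid P) →+ P :=
      (Q.subtype.comp (AddMonoidHom.fst _ _)) +
        ((addUnitsSubmonoid P).subtype.comp (AddMonoidHom.snd _ _)) with hf
    have hfdef : ∀ z : Q × addUnitsSubmonoid P, f z = (z.1 : P) + (z.2 : P) :=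
      fun z => rfl
    have hbij : Function.Bijective f := by
      constructor
      · rintro ⟨⟨q, hq⟩, ⟨u, hu⟩⟩ ⟨⟨q', hq'⟩, ⟨u', hu'⟩⟩ heq
        simp only [hfdef] at heq
        have hπq : π (ι q) = 0 := hq
        have hπq' : π (ι q') = 0 := hq'
        have hπu : π (ι u) = ι u := hπid _ ⟨u, hu, rfl⟩
        have hπu' : π (ι u') = ι u' := hπid _ ⟨u', hu', rfl⟩
        have hι : ι q + ι u = ι q' + ι u' := by
          rw [← map_add, ← map_add, heq]
        have huu : ι u = ι u' := by
          have := congrArg π hι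
          rwa [map_add, map_add, hπq, hπq', hπu, hπu', zero_add, zero_add] at this
        have huu' : u = u' := hι_inj huu
        subst huu'
        have : q = q' := add_right_cancel (heq : q + u = q' + u)
        subst this
        rfl
      · intro p
        obtain ⟨v, hv, hvp⟩ := hπU (ι p)
        obtain ⟨w, hw, hvw⟩ := hneg v hv
        have hπw : π (ι w) = ι w := hπid _ ⟨w, hw, rfl⟩
        have hqmem : p + w ∈ Q := by
          show π (ι (p + w)) = 0
          rw [map_add, map_add, ← hvp, hπw, ← map_add, hvw, map_zero]
        refine ⟨⟨⟨p + w, hqmem⟩, ⟨v, hv⟩⟩, ?_⟩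
        rw [hfdef]
        show p + w + v = p
        rw [add_assoc, add_comm w v, hvw, add_zero]
    refine ⟨AddEquiv.ofBijective f hbij, fun z => ?_⟩
    rw [AddEquiv.ofBijective_apply, hfdef]
end

section
/- Let P be an integral commutative monoid with Grothendieck group ι : P → G (so ι is an injective monoid homomorphism into an abelian group G such that every element of G has the form ι(a) − ι(b) with a, b ∈ P). Let U = ι(P^×) ⊆ G, let Ḡ = G/U, and let π : G → Ḡ be the quotient homomorphism. Then: (i) every group homomorphism σ : Ḡ → G with π ∘ σ = id maps the submonoid π(ι(P)) ⊆ Ḡ into ι(P); and (ii) the restriction map σ ↦ σ|_{π(ι(P))} is a bijection between the set of group homomorphisms σ : Ḡ → G with π ∘ σ = id and the set of monoid homomorphisms ε : π(ι(P)) → ι(P) satisfying π(ε(m)) = m for all m ∈ π(ι(P)). -/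
/-!
Statement 6: splittings of `P → P/P^×` correspond to splittings of `P^gp → (P/P^×)^gp`.
With `ι : P → G` a realization of the Grothendieck group, `U = ι(P^×) ⊆ G`,
`Ḡ = G/U`, `π : G → Ḡ`:
(i) every group-homomorphism section `σ` of `π` maps `π(ι(P))` into `ι(P)`;
(ii) restriction is a bijection between sections of `π` and monoid homomorphisms
`ε : π(ι(P)) → ι(P)` with `π(ε(m)) = m`.
-/

/-- The image `ι(P^×)` of the invertible elements, as a subgroup of `G`. -/
def addUnitsImage {P G : Type*} [AddCommMonoid P] [AddCommGroup G] (ι : P →+ G) :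
    AddSubgroup G where
  carrier := ι '' {p : P | IsAddUnit p}
  zero_mem' := ⟨0, isAddUnit_zero, map_zero ι⟩
  add_mem' := by
    rintro a b ⟨p, hp, rfl⟩ ⟨q, hq, rfl⟩
    exact ⟨p + q, hp.add hq, map_add ι p q⟩
  neg_mem' := by
    rintro a ⟨p, hp, rfl⟩
    obtain ⟨u, rfl⟩ := hp
    refine ⟨((-u : AddUnits P) : P), (-u).isAddUnit, ?_⟩
    have h : ι ((u : P)) + ι (((-u : AddUnits P)) : P) = 0 := by
      rw [← map_add]
      simp
    exact (neg_eq_of_add_eq_zero_right h).symm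

theorem splittings_bijection
    (P : Type) [AddCancelCommMonoid P]
    (G : Type) [AddCommGroup G] (ι : P →+ G)
    (hι_inj : Function.Injective ι)
    (hι_diff : ∀ g : G, ∃ a b : P, g = ι a - ι b) :
    -- (i): any section of the quotient map sends the image of `P` into the image of `P`
    (∀ σ : (G ⧸ addUnitsImage ι) →+ G,
      (QuotientAddGroup.mk' (addUnitsImage ι)).comp σ = AddMonoidHom.id _ →
      ∀ p : P, σ (QuotientAddGroup.mk' (addUnitsImage ι) (ι p)) ∈ Set.range ι) ∧
    -- (ii): restriction to `π(ι(P))` is a bijection onto monoid splittings: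
    -- every monoid splitting `ε` extends to a unique group section `σ`
    (∀ ε : (AddMonoidHom.mrange
          ((QuotientAddGroup.mk' (addUnitsImage ι)).comp ι)) →+ G,
      (∀ m, ε m ∈ AddMonoidHom.mrange ι) →
      (∀ m, QuotientAddGroup.mk' (addUnitsImage ι) (ε m) = (m : G ⧸ addUnitsImage ι)) →
      ∃! σ : (G ⧸ addUnitsImage ι) →+ G,
        (QuotientAddGroup.mk' (addUnitsImage ι)).comp σ = AddMonoidHom.id _ ∧
        ∀ m : AddMonoidHom.mrange
            ((QuotientAddGroup.mk' (addUnitsImage ι)).comp ι),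
          σ (m : G ⧸ addUnitsImage ι) = ε m) := by
  classical
  set U := addUnitsImage ι with hU
  set π := QuotientAddGroup.mk' U with hπ
  constructor
  · -- part (i)
    intro σ hσ p
    have h1 : π (σ (π (ι p))) = π (ι p) := by
      have := DFunLike.congr_fun hσ (π (ι p))
      simpa using this
    have h2 : σ (π (ι p)) - ι p ∈ U := by
      rw [← QuotientAddGroup.eq_iff_sub_mem]
      simpa [π, QuotientAddGroup.mk'_apply] using h1
    obtain ⟨q, hq, hq2⟩ := h2
    refine ⟨q + p, ?_⟩
    rw [map_add, hq2]
    abel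
  · -- part (ii)
    intro ε hε1 hε2
    -- membership of π (ι p) in the range
    have hmem : ∀ p : P, π (ι p) ∈ AddMonoidHom.mrange (π.comp ι) := fun p => ⟨p, rfl⟩
    set m : P → AddMonoidHom.mrange (π.comp ι) := fun p => ⟨π (ι p), hmem p⟩ with hm
    set e : P → G := fun p => ε (m p) with he
    have he_add : ∀ p q : P, e (p + q) = e p + e q := by
      intro p q
      have : m (p + q) = m p + m q := by
        apply Subtype.ext
        simp [m, map_add]
      rw [he]
      simp only
      rw [this, map_add]
    have he_congr : ∀ p q : P, π (ι p) = π (ι q) → e p = e q := by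
      intro p q h
      have : m p = m q := Subtype.ext h
      simp [he, this]
    have hπe : ∀ p : P, π (e p) = π (ι p) := by
      intro p
      have := hε2 (m p)
      simpa [he, m] using this
    -- choose decompositions
    have hdec : ∀ x : G ⧸ U, ∃ ab : P × P, x = π (ι ab.1) - π (ι ab.2) := by
      intro x
      obtain ⟨g, rfl⟩ := QuotientAddGroup.mk'_surjective U x
      obtain ⟨a, b, rfl⟩ := hι_diff g
      exact ⟨(a, b), by simp [π]⟩
    set d : (G ⧸ U) → P × P := fun x => (hdec x).choose with hd
    have hd_spec : ∀ x : G ⧸ U, x = π (ι (d x).1) - π (ι (d x).2) := fun x => (hdec x).choose_spec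
    -- key cancellation lemma
    have key : ∀ a b c f : P, π (ι (a + f)) = π (ι (b + c)) → e a - e b = e c - e f := by
      intro a b c f h
      have h2 : e a + e f = e b + e c := by
        rw [← he_add, ← he_add]
        exact he_congr _ _ h
      have : (e a - e b) - (e c - e f) = (e a + e f) - (e b + e c) := by abel
      rw [h2, sub_self] at this
      exact sub_eq_zero.mp this
    set σ : (G ⧸ U) →+ G :=
      { toFun := fun x => e (d x).1 - e (d x).2
        map_zero' := by
          show e (d (0 : G ⧸ U)).1 - e (d (0 : G ⧸ U)).2 = 0
          have h := hd_spec 0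
          have h2 : π (ι (d (0 : G ⧸ U)).1) = π (ι (d (0 : G ⧸ U)).2) := by
            have := h.symm
            rwa [sub_eq_zero] at this
          rw [he_congr _ _ h2, sub_self]
        map_add' := by
          intro x y
          show e (d (x + y)).1 - e (d (x + y)).2 =
            (e (d x).1 - e (d x).2) + (e (d y).1 - e (d y).2)
          have hx := hd_spec x
          have hy := hd_spec y
          have hxy := hd_spec (x + y)
          set a := (d (x + y)).1; set b := (d (x + y)).2
          set c := (d x).1; set f := (d x).2
          set g := (d y).1; set h := (d y).2
          have hq : π (ι (a + (f + h))) = π (ι (b + (c + g))) := by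
            have : π (ι a) - π (ι b) = (π (ι c) - π (ι f)) + (π (ι g) - π (ι h)) := by
              rw [← hx, ← hy, ← hxy]
            simp only [map_add]
            have goal : π (ι a) + (π (ι f) + π (ι h)) = π (ι b) + (π (ι c) + π (ι g)) := by
              have h2 : π (ι a) - π (ι b) - ((π (ι c) - π (ι f)) + (π (ι g) - π (ι h))) = 0 := by
                rw [this]; abel
              have h3 : π (ι a) + (π (ι f) + π (ι h)) - (π (ι b) + (π (ι c) + π (ι g)))
                  = π (ι a) - π (ι b) - ((π (ι c) - π (ι f)) + (π (ι g) - π (ι h))) := by abel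
              rw [h2] at h3
              exact sub_eq_zero.mp h3
            exact goal
          have h4 : e a - e b = e (c + g) - e (f + h) := by
            have := key a b (c + g) (f + h) (by rw [add_comm (f) (h)] at hq ⊢; exact hq)
            exact this
          rw [h4, he_add, he_add]
          abel }
      with hσdef
    have hσ_val : ∀ x : G ⧸ U, σ x = e (d x).1 - e (d x).2 := fun _ => rfl
    have hσ_sec : ∀ x : G ⧸ U, π (σ x) = x := by
      intro x
      rw [hσ_val, map_sub, hπe, hπe, ← hd_spec]
    have hσ_on : ∀ p : P, σ (π (ι p)) = e p := by
      intro p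
      have hx := hd_spec (π (ι p))
      set a := (d (π (ι p))).1 with ha
      set b := (d (π (ι p))).2 with hb
      have hq : π (ι (p + b)) = π (ι a) := by
        rw [map_add, map_add, hx]
        abel
      have h5 : e p + e b = e a := by rw [← he_add]; exact he_congr _ _ hq
      calc σ (π (ι p)) = e a - e b := hσ_val _
        _ = e p := by rw [← h5]; abel
    refine ⟨σ, ⟨?_, ?_⟩, ?_⟩
    · ext x
      simpa using hσ_sec x
    · rintro ⟨x, p, rfl⟩
      have : ε (⟨π.comp ι p, hmem p⟩ : AddMonoidHom.mrange (π.comp ι)) = e p := rfl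
      simpa [this] using hσ_on p
    · rintro σ' ⟨hσ'1, hσ'2⟩
      refine AddMonoidHom.ext fun x => ?_
      obtain ⟨a, b, hx⟩ : ∃ a b : P, x = π (ι a) - π (ι b) := by
        obtain ⟨g, rfl⟩ := QuotientAddGroup.mk'_surjective U x
        obtain ⟨a, b, rfl⟩ := hι_diff g
        exact ⟨a, b, by simp [π]⟩
      have hagree : ∀ p : P, σ' (π (ι p)) = e p := by
        intro p
        have := hσ'2 (m p)
        simpa [m, he] using this
      rw [hx, map_sub, map_sub, hagree, hagree, ← hσ_on, ← hσ_on]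
end

section
/- Let τ : ℂ → ℂ be a function satisfying τ(z + n) = τ(z) for all z ∈ ℂ and n ∈ ℤ, and τ(z) − z ∈ ℤ for all z ∈ ℂ (so τ induces a section of the projection ℂ → ℂ/ℤ), and set Σ = {z ∈ ℂ : z − τ(z) ∈ ℕ}. Let P be an integral commutative monoid, G an abelian group, ι : P → G an injective monoid homomorphism, and r ≥ 0. Set Q = P × ℕ^r and Q′ = P × ℤ^r, and let j : Q′ → G × ℂ^r be the injective monoid homomorphism j(p, m) = (ι(p), m) (viewing ℤ^r ⊆ ℂ^r). Let V′ be a module over the monoid algebra ℂ[Q′] equipped with a (G × ℂ^r)-grading, i.e. a family (V′_h)_{h ∈ G×ℂ^r} of ℂ-subspaces whose internal direct sum is V′ and such that x^{q′} · V′_h ⊆ V′_{j(q′)+h} for all q′ ∈ Q′. Suppose v′_1, …, v′_s are homogeneous elements, with v′_i of degree (η_i, λ′_{i,1}, …, λ′_{i,r}), that generate V′ as a ℂ[Q′]-module. Define V = ⊕ V′_{(g,λ)}, the sum over those (g, λ) ∈ G × ℂ^r with λ ∈ Σ^r. Then V is a ℂ[Q]-submodule of V′, and V is generated as a ℂ[Q]-module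 by the s elements v_i = x^{(0, m_i)} · v′_i, where m_i ∈ ℤ^r has components m_{i,t} = τ(λ′_{i,t}) − λ′_{i,t}; moreover each v_i is homogeneous of degree (η_i, τ(λ′_{i,1}), …, τ(λ′_{i,r})), whose last r coordinates lie in the image of τ. -/
/-!
Statement 7 (key step in the construction of canonical extensions):  Given a section
`τ` of `ℂ → ℂ/ℤ`, `Σ = {z : z − τ(z) ∈ ℕ}`, `Q = P × ℕ^r ⊆ Q′ = P × ℤ^r`, and a
`(G × ℂ^r)`-graded `ℂ[Q′]`-module `V′` generated by homogeneous elements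
`v′_1, …, v′_s`, the sum `V` of the graded pieces with last `r` degrees in `Σ` is a
`ℂ[Q]`-submodule of `V′`, generated over `ℂ[Q]` by the homogeneous elements
`v_i = x^{(0, m_i)}·v′_i` of degrees `(η_i, τ(λ′_{i,1}), …, τ(λ′_{i,r}))`, whose last
`r` coordinates lie in the image of `τ`.
-/

open AddMonoidAlgebra

/-- The inclusion of monoids `P × ℕ^r → P × ℤ^r`. -/
def prodNatToInt (P : Type*) [AddCommMonoid P] (r : ℕ) :
    P × (Fin r → ℕ) →+ P × (Fin r → ℤ) where
  toFun x := (x.1, fun i => (x.2 i : ℤ))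
  map_zero' := by
    refine Prod.ext rfl ?_
    funext i; simp
  map_add' x y := by
    refine Prod.ext rfl ?_
    funext i; simp

/-- The injective monoid homomorphism `j : P × ℤ^r → G × ℂ^r`, `j(p, m) = (ι p, m)`. -/
def gradingHom {P G : Type*} [AddCommMonoid P] [AddCommGroup G] (ι : P →+ G) (r : ℕ) :
    P × (Fin r → ℤ) →+ G × (Fin r → ℂ) where
  toFun x := (ι x.1, fun i => (x.2 i : ℂ))
  map_zero' := by
    refine Prod.ext (map_zero ι) ?_
    funext i; simp
  map_add' x y := by
    refine Prod.ext (map_add ι _ _) ?_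
    funext i; simp

/-- `Σ = {z ∈ ℂ : z − τ(z) ∈ ℕ}`. -/
def sigmaSet (τ : ℂ → ℂ) : Set ℂ := {z : ℂ | ∃ n : ℕ, z - τ z = (n : ℂ)}

/-- The subspace `V = ⊕ V′_{(g,λ)}`, the sum over those `(g, λ)` with `λ ∈ Σ^r`. -/
def sigmaPart (τ : ℂ → ℂ) {G : Type*} {r : ℕ} {V' : Type*} [AddCommGroup V']
    [Module ℂ V'] (Vh : G × (Fin r → ℂ) → Submodule ℂ V') : Submodule ℂ V' :=
  ⨆ (h : G × (Fin r → ℂ)) (_ : ∀ t, h.2 t ∈ sigmaSet τ), Vh h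


section Helpers
open AddMonoidAlgebra
variable {M : Type*} [AddCommMonoid M] {V : Type*} [AddCommGroup V] [Module ℂ V]
  [Module (AddMonoidAlgebra ℂ M) V] [IsScalarTower ℂ (AddMonoidAlgebra ℂ M) V]

lemma single_smul'' (q : M) (c : ℂ) (v : V) :
    (AddMonoidAlgebra.single q c) • v = c • ((of' ℂ M q) • v) := by
  rw [← smul_assoc, of'_apply, AddMonoidAlgebra.smul_single', mul_one]

omit [Module ℂ V] [IsScalarTower ℂ (AddMonoidAlgebra ℂ M) V] in
lemma of'_smul_of'_smul (x y : M) (v : V) :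
    (of' ℂ M x) • (of' ℂ M y) • v = (of' ℂ M (x + y)) • v := by
  rw [← mul_smul, of'_apply, of'_apply, of'_apply, AddMonoidAlgebra.single_mul_single, one_mul]

lemma smul_eq_support_sum (a : AddMonoidAlgebra ℂ M) (v : V) :
    a • v = ∑ q ∈ a.coeff.support, a.coeff q • ((of' ℂ M q) • v) := by
  conv_lhs => rw [← AddMonoidAlgebra.sum_coeff_single a]
  rw [Finsupp.sum, Finset.sum_smul]
  exact Finset.sum_congr rfl fun q _ => single_smul'' q (a.coeff q) v

lemma smul_comm_complex (a : AddMonoidAlgebra ℂ M) (c : ℂ) (v : V) :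
    a • (c • v) = c • (a • v) :=
  calc a • (c • v) = a • ((c • (1 : AddMonoidAlgebra ℂ M)) • v) := by rw [smul_assoc, one_smul]
  _ = (a * (c • 1)) • v := (mul_smul _ _ _).symm
  _ = ((c • 1) * a) • v := by rw [mul_comm]
  _ = (c • (1 : AddMonoidAlgebra ℂ M)) • (a • v) := mul_smul _ _ _
  _ = c • (a • v) := by rw [smul_assoc, one_smul]

lemma mapDH_apply {N : Type*} [AddCommMonoid N] (f : M →+ N) (a : AddMonoidAlgebra ℂ M) :
    AddMonoidAlgebra.mapDomainRingHom ℂ f a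
      = ∑ q ∈ a.coeff.support, AddMonoidAlgebra.single (f q) (a.coeff q) := by
  rw [AddMonoidAlgebra.mapDomainRingHom_apply, AddMonoidAlgebra.mapDomain, Finsupp.mapDomain,
    Finsupp.sum, AddMonoidAlgebra.ofCoeff_sum]
  rfl

lemma mapDH_eq {N : Type*} [AddCommMonoid N] (f : M →+ N) (a : AddMonoidAlgebra ℂ M) :
    AddMonoidAlgebra.mapDomainRingHom ℂ f a = AddMonoidAlgebra.mapDomain f a :=
  rfl

end Helpers

lemma sum_filter_of_indep {H V : Type*} [DecidableEq H] [AddCommGroup V] [Module ℂ V]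
    (Vh : H → Submodule ℂ V) (hindep : iSupIndep Vh)
    {ι : Type*} (S : Finset ι) (w : ι → V) (d : ι → H)
    (hw : ∀ k ∈ S, w k ∈ Vh (d k)) (h : H) (hsum : ∑ k ∈ S, w k ∈ Vh h) :
    ∑ k ∈ S, w k = ∑ k ∈ S.filter (fun k => d k = h), w k := by
  have hsplit : ∑ k ∈ S, w k = (∑ k ∈ S.filter (fun k => d k = h), w k)
      + ∑ k ∈ S.filter (fun k => ¬ d k = h), w k :=
    (Finset.sum_filter_add_sum_filter_not S _ w).symm
  have hmem1 : ∑ k ∈ S.filter (fun k => d k = h), w k ∈ Vh h := by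
    refine Submodule.sum_mem _ fun k hk => ?_
    obtain ⟨hkS, hdk⟩ := Finset.mem_filter.mp hk
    exact hdk ▸ hw k hkS
  have hmem2 : ∑ k ∈ S.filter (fun k => ¬ d k = h), w k ∈ ⨆ (j) (_ : j ≠ h), Vh j := by
    refine Submodule.sum_mem _ fun k hk => ?_
    obtain ⟨hkS, hdk⟩ := Finset.mem_filter.mp hk
    exact Submodule.mem_iSup_of_mem (d k) (Submodule.mem_iSup_of_mem hdk (hw k hkS))
  have hz : ∑ k ∈ S.filter (fun k => ¬ d k = h), w k = 0 := by
    have h1 : ∑ k ∈ S.filter (fun k => ¬ d k = h), w k ∈ Vh h := by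
      have := Submodule.sub_mem _ hsum hmem1
      rwa [hsplit, add_sub_cancel_left] at this
    exact (Submodule.mem_bot ℂ).mp ((hindep h).le_bot (Submodule.mem_inf.mpr ⟨h1, hmem2⟩))
  rw [hsplit, hz, add_zero]

theorem sigma_part_generation
    (τ : ℂ → ℂ)
    (hτ_per : ∀ (z : ℂ) (n : ℤ), τ (z + (n : ℂ)) = τ z)
    (hτ_int : ∀ z : ℂ, ∃ n : ℤ, τ z - z = (n : ℂ))
    (P : Type) [AddCancelCommMonoid P]
    (G : Type) [AddCommGroup G] (ι : P →+ G) (hι_inj : Function.Injective ι)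
    (r : ℕ)
    (V' : Type) [AddCommGroup V'] [Module ℂ V']
    [Module (AddMonoidAlgebra ℂ (P × (Fin r → ℤ))) V']
    [IsScalarTower ℂ (AddMonoidAlgebra ℂ (P × (Fin r → ℤ))) V']
    (Vh : G × (Fin r → ℂ) → Submodule ℂ V')
    (hindep : iSupIndep Vh)
    (hsup : (⨆ h, Vh h) = ⊤)
    (hgrade : ∀ (q' : P × (Fin r → ℤ)) (h : G × (Fin r → ℂ)), ∀ v ∈ Vh h,
      (of' ℂ (P × (Fin r → ℤ)) q') • v ∈ Vh (gradingHom ι r q' + h))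
    (s : ℕ) (v' : Fin s → V') (η : Fin s → G) (lam : Fin s → Fin r → ℂ)
    (hv'_hom : ∀ i, v' i ∈ Vh (η i, lam i))
    (hv'_gen : Submodule.span (AddMonoidAlgebra ℂ (P × (Fin r → ℤ)))
      (Set.range v') = ⊤) :
    -- `V` is a `ℂ[Q]`-submodule of `V′`
    (∀ a : AddMonoidAlgebra ℂ (P × (Fin r → ℕ)), ∀ v ∈ sigmaPart τ Vh,
      (AddMonoidAlgebra.mapDomainRingHom ℂ (prodNatToInt P r) a) • v
        ∈ sigmaPart τ Vh) ∧
    -- and it is generated over `ℂ[Q]` by the elements `v_i = x^{(0, m_i)} · v′_i`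
    ∃ m : Fin s → Fin r → ℤ,
      (∀ i t, ((m i t : ℤ) : ℂ) = τ (lam i t) - lam i t) ∧
      -- each `v_i` lies in `V`
      (∀ i, (of' ℂ (P × (Fin r → ℤ)) (0, m i)) • v' i ∈ sigmaPart τ Vh) ∧
      -- each `v_i` is homogeneous of degree `(η_i, τ(λ′_{i,1}), …, τ(λ′_{i,r}))`
      (∀ i, (of' ℂ (P × (Fin r → ℤ)) (0, m i)) • v' i
          ∈ Vh (η i, fun t => τ (lam i t))) ∧
      -- whose last `r` coordinates lie in the image of `τ`
      (∀ i t, τ (lam i t) ∈ Set.range τ) ∧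
      -- the `v_i` generate `V` as a `ℂ[Q]`-module
      (∀ v ∈ sigmaPart τ Vh, ∃ c : Fin s → AddMonoidAlgebra ℂ (P × (Fin r → ℕ)),
        v = ∑ i, (AddMonoidAlgebra.mapDomainRingHom ℂ (prodNatToInt P r) (c i)) •
          ((of' ℂ (P × (Fin r → ℤ)) (0, m i)) • v' i)) := by
    classical
  set jn := prodNatToInt P r with hjn
  have memP : ∀ (h : G × (Fin r → ℂ)), (∀ t, h.2 t ∈ sigmaSet τ) →
      ∀ v ∈ Vh h, v ∈ sigmaPart τ Vh := fun h hc v hv =>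
    Submodule.mem_iSup_of_mem h (Submodule.mem_iSup_of_mem hc hv)
  have shift : ∀ (z : ℂ), z ∈ sigmaSet τ → ∀ n : ℕ, (((n : ℤ) : ℂ)) + z ∈ sigmaSet τ := by
    intro z hz n
    obtain ⟨k, hk⟩ := hz
    refine ⟨n + k, ?_⟩
    have hp : τ ((((n : ℤ)) : ℂ) + z) = τ z := by rw [add_comm]; exact hτ_per z n
    rw [hp]
    push_cast
    linear_combination hk
  have tmem : ∀ z : ℂ, τ z ∈ sigmaSet τ := by
    intro z
    obtain ⟨n, hn⟩ := hτ_int z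
    refine ⟨0, ?_⟩
    have hfix : τ (τ z) = τ z := by
      have hz : τ z = z + (((n : ℤ)) : ℂ) := by linear_combination hn
      conv_lhs => rw [hz]
      exact hτ_per z n
    rw [hfix]; simp
  have hmono : ∀ (q : P × (Fin r → ℕ)) (h : G × (Fin r → ℂ)), (∀ t, h.2 t ∈ sigmaSet τ) →
      ∀ t, (gradingHom ι r (jn q) + h).2 t ∈ sigmaSet τ := by
    intro q h hc t
    have he : (gradingHom ι r (jn q) + h).2 t = ((((q.2 t : ℤ)) : ℂ)) + h.2 t := rfl
    rw [he]
    exact shift _ (hc t) (q.2 t)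
  have hstab : ∀ (q : P × (Fin r → ℕ)), ∀ v ∈ sigmaPart τ Vh,
      (of' ℂ (P × (Fin r → ℤ)) (jn q)) • v ∈ sigmaPart τ Vh := by
    intro q
    let L : V' →ₗ[ℂ] V' :=
      { toFun := fun v => (of' ℂ (P × (Fin r → ℤ)) (jn q)) • v
        map_add' := fun x y => smul_add _ x y
        map_smul' := fun c v => smul_comm_complex _ c v }
    have hle : sigmaPart τ Vh ≤ Submodule.comap L (sigmaPart τ Vh) := by
      refine iSup_le fun h => iSup_le fun hc => fun v hv => ?_
      exact memP _ (hmono q h hc) _ (hgrade (jn q) h v hv)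
    exact fun v hv => hle hv
  constructor
  · intro a v hv
    rw [mapDH_apply, Finset.sum_smul]
    refine Submodule.sum_mem _ fun q hq => ?_
    rw [single_smul'']
    exact Submodule.smul_mem _ _ (hstab q v hv)
  · choose m hm using fun i t => hτ_int (lam i t)
    have hdeg : ∀ i, gradingHom ι r (0, m i) + (η i, lam i)
        = (η i, fun t => τ (lam i t)) := by
      intro i
      refine Prod.ext ?_ ?_
      · show ι 0 + η i = η i
        rw [map_zero, zero_add]
      · funext t
        show (((m i t : ℤ)) : ℂ) + lam i t = τ (lam i t)
        linear_combination -(hm i t)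
    have hvimem : ∀ i, (of' ℂ (P × (Fin r → ℤ)) (0, m i)) • v' i
        ∈ Vh (η i, fun t => τ (lam i t)) := by
      intro i
      have := hgrade (0, m i) (η i, lam i) (v' i) (hv'_hom i)
      rwa [hdeg i] at this
    refine ⟨m, fun i t => (hm i t).symm, ?_, hvimem, fun i t => ⟨lam i t, rfl⟩, ?_⟩
    · intro i
      exact memP _ (fun t => tmem (lam i t)) _ (hvimem i)
    · -- generation
      set vm : Fin s → V' := fun i => (of' ℂ (P × (Fin r → ℤ)) (0, m i)) • v' i with hvm
      let F : (Fin s → AddMonoidAlgebra ℂ (P × (Fin r → ℕ))) →ₗ[ℂ] V' :=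
        { toFun := fun c => ∑ i, (AddMonoidAlgebra.mapDomainRingHom ℂ jn (c i)) • vm i
          map_add' := by
            intro x y
            rw [← Finset.sum_add_distrib]
            refine Finset.sum_congr rfl fun i _ => ?_
            rw [Pi.add_apply, map_add, add_smul]
          map_smul' := by
            intro c x
            rw [RingHom.id_apply, Finset.smul_sum]
            refine Finset.sum_congr rfl fun i _ => ?_
            have hms : (AddMonoidAlgebra.mapDomainRingHom ℂ jn (c • x i))
                = c • AddMonoidAlgebra.mapDomainRingHom ℂ jn (x i) := by
              rw [mapDH_eq, mapDH_eq]
              ext; simp [AddMonoidAlgebra.mapDomain, Finsupp.mapDomain_smul]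
            rw [Pi.smul_apply, hms, smul_assoc] }
      suffices hle : sigmaPart τ Vh ≤ LinearMap.range F by
        intro v hv
        obtain ⟨c, hc⟩ := hle hv
        exact ⟨c, hc.symm⟩
      refine iSup_le fun h => iSup_le fun hcond => fun v hv => ?_
      have hvtop : v ∈ Submodule.span (AddMonoidAlgebra ℂ (P × (Fin r → ℤ)))
          (Set.range v') := by rw [hv'_gen]; trivial
      obtain ⟨a, ha⟩ := (Submodule.mem_span_range_iff_exists_fun _).mp hvtop
      set w : (Σ _ : Fin s, P × (Fin r → ℤ)) → V' :=
        fun k => ((a k.1).coeff k.2) • ((of' ℂ (P × (Fin r → ℤ)) k.2) • v' k.1) with hw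
      set d : (Σ _ : Fin s, P × (Fin r → ℤ)) → G × (Fin r → ℂ) :=
        fun k => gradingHom ι r k.2 + (η k.1, lam k.1) with hd
      have hexp : v = ∑ k ∈ Finset.univ.sigma (fun i : Fin s => (a i).coeff.support), w k := by
        rw [Finset.sum_sigma]
        rw [← ha]
        exact Finset.sum_congr rfl fun i _ => smul_eq_support_sum (a i) (v' i)
      have hwmem : ∀ k ∈ Finset.univ.sigma (fun i : Fin s => (a i).coeff.support), w k ∈ Vh (d k) :=
        fun k _ => Submodule.smul_mem _ _
          (hgrade k.2 (η k.1, lam k.1) (v' k.1) (hv'_hom k.1))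
      have hfil := sum_filter_of_indep Vh hindep _ w d hwmem h (hexp ▸ hv)
      have key : ∀ (i : Fin s) (q : P × (Fin r → ℤ)),
          gradingHom ι r q + (η i, lam i) = h → ∀ t, 0 ≤ q.2 t - m i t := by
        intro i q hq t
        obtain ⟨n, hn⟩ := hcond t
        have h2 : (((q.2 t : ℤ)) : ℂ) + lam i t = h.2 t := congrFun (congrArg Prod.snd hq) t
        have hτh : τ (h.2 t) = τ (lam i t) := by
          rw [← h2, add_comm (((q.2 t : ℤ)) : ℂ) (lam i t)]
          exact hτ_per (lam i t) (q.2 t)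
        have hcast : (((q.2 t - m i t : ℤ)) : ℂ) = (((n : ℤ)) : ℂ) := by
          push_cast
          linear_combination hn + h2 + hτh + hm i t
        have hz : q.2 t - m i t = ((n : ℤ)) := by exact_mod_cast hcast
        rw [hz]
        exact Int.ofNat_nonneg n
      refine ⟨fun i => ∑ q ∈ (a i).coeff.support.filter
          (fun q => gradingHom ι r q + (η i, lam i) = h),
          AddMonoidAlgebra.single (q.1, fun t => (q.2 t - m i t).toNat) ((a i).coeff q), ?_⟩
      show (∑ i, _ • vm i) = v
      have hrhs : ∀ i : Fin s, (AddMonoidAlgebra.mapDomainRingHom ℂ jn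
            (∑ q ∈ (a i).coeff.support.filter (fun q => gradingHom ι r q + (η i, lam i) = h),
              AddMonoidAlgebra.single (q.1, fun t => (q.2 t - m i t).toNat) ((a i).coeff q))) • vm i
          = ∑ q ∈ (a i).coeff.support.filter (fun q => gradingHom ι r q + (η i, lam i) = h),
              ((a i).coeff q) • ((of' ℂ (P × (Fin r → ℤ)) q) • v' i) := by
        intro i
        rw [map_sum, Finset.sum_smul]
        refine Finset.sum_congr rfl fun q hq => ?_
        obtain ⟨hqs, hqd⟩ := Finset.mem_filter.mp hq
        have hq' : jn (q.1, fun t => (q.2 t - m i t).toNat) = (q.1, fun t => q.2 t - m i t) := by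
          refine Prod.ext rfl ?_
          funext t
          exact Int.toNat_of_nonneg (key i q hqd t)
        have hsing : AddMonoidAlgebra.mapDomainRingHom ℂ jn
            (AddMonoidAlgebra.single (q.1, fun t => (q.2 t - m i t).toNat) ((a i).coeff q))
            = AddMonoidAlgebra.single ((q.1, fun t => q.2 t - m i t) : P × (Fin r → ℤ))
              ((a i).coeff q) := by
          rw [mapDH_eq, AddMonoidAlgebra.mapDomain_single, hq']
        rw [hsing, single_smul'']
        congr 1
        rw [hvm]
        rw [of'_smul_of'_smul]
        have hadd : ((q.1, fun t => q.2 t - m i t) : P × (Fin r → ℤ)) + (0, m i) = q := by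
          refine Prod.ext (add_zero _) ?_
          funext t
          show (q.2 t - m i t) + m i t = q.2 t
          ring
        rw [hadd]
      calc (∑ i, (AddMonoidAlgebra.mapDomainRingHom ℂ jn
            (∑ q ∈ (a i).coeff.support.filter (fun q => gradingHom ι r q + (η i, lam i) = h),
              AddMonoidAlgebra.single (q.1, fun t => (q.2 t - m i t).toNat) ((a i).coeff q))) • vm i)
          = ∑ i, ∑ q ∈ (a i).coeff.support.filter
              (fun q => gradingHom ι r q + (η i, lam i) = h), w ⟨i, q⟩ :=
            Finset.sum_congr rfl fun i _ => hrhs i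
        _ = ∑ k ∈ Finset.univ.sigma (fun i : Fin s => (a i).coeff.support.filter
              (fun q => gradingHom ι r q + (η i, lam i) = h)), w k :=
            (Finset.sum_sigma _ _ _).symm
        _ = ∑ k ∈ (Finset.univ.sigma (fun i : Fin s => (a i).coeff.support)).filter
              (fun k => d k = h), w k := by
            apply Finset.sum_congr _ (fun _ _ => rfl)
            ext k
            simp only [Finset.mem_sigma, Finset.mem_filter, Finset.mem_univ, true_and, hd]
        _ = v := by rw [← hfil, ← hexp]
end
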